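/- In the two-player beauty contest game, for every player i, every k ≥ 1, every belief μ ∈ Δ^{θ_{ik}}, and all actions a_i, a′_i ∈ {0,…,100} with a_i < a′_i, the expected payoffs satisfy E_μ[u_i(a_i, ·)] − E_μ[u_i(a′_i, ·)] ≥ f^k(0) · (a′_i − a_i)/101 > 0; that is, every positive action is strictly worse than every smaller action against any belief in Δ^{θ_{ik}}. -/

import Mathlib

open scoped BigOperators
open Classical

noncomputable section

/-- A belief of a player: a probability distribution over
(opponent level-type, opponent action) pairs. -/
structure Belief (B : Type*) where
  p : ℕ × B → ℝ
  nonneg : ∀ x, 0 ≤ p x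
  hasSum_one : HasSum p 1

/-- Marginal probability assigned to the opponent's level-`t` type. -/
def Belief.marg {B : Type*} [Fintype B] (μ : Belief B) (t : ℕ) : ℝ := ∑ b : B, μ.p (t, b)

/-- Probability assigned by a belief to a set of (level, action) pairs. -/
def Belief.probOn {B : Type*} (μ : Belief B) (S : Set (ℕ × B)) : ℝ := ∑' x, S.indicator μ.p x

/-- `f` normalized to the levels `0, …, k-1` (denoted `f^k` in the paper). -/
def fnorm (f : ℕ → ℝ) (k t : ℕ) : ℝ := f t / ∑ ℓ ∈ Finset.range k, f ℓ

/-- Membership in `Δ^{θ_{ik}}`: conditions K1–K3 for `k ≥ 1`; no restriction for `k = 0`. -/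
def memDelta {B : Type*} [Fintype B] (f : ℕ → ℝ) (k : ℕ) (μ : Belief B) : Prop :=
  k ≠ 0 →
    ((∀ t, k ≤ t → μ.marg t = 0) ∧
     (0 < μ.marg 0 → ∀ b : B, μ.p (0, b) / μ.marg 0 = 1 / (Fintype.card B : ℝ)) ∧
     (∀ t, t < k → μ.marg t = fnorm f k t))

/-- Expected payoff of own action `a` for the own level-`k` type given belief `μ`:
the level-0 type's payoff is constant `0`, all other types get `v`. -/
def expPay {A B : Type*} (v : A → B → ℝ) (k : ℕ) (μ : Belief B) (a : A) : ℝ :=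
  ∑' x : ℕ × B, μ.p x * (if k = 0 then 0 else v a x.2)

/-- `a` is a best response to belief `μ` under the own level-`k` type. -/
def isBR {A B : Type*} (v : A → B → ℝ) (k : ℕ) (μ : Belief B) (a : A) : Prop :=
  ∀ a' : A, expPay v k μ a' ≤ expPay v k μ a

/-- The Δ^κ-rationalization procedure; component 1 is player 1's set of surviving
(level, action) pairs, component 2 is player 2's. -/
def SigmaProc {A B : Type*} [Fintype A] [Fintype B]
    (v1 : A → B → ℝ) (v2 : B → A → ℝ) (f : ℕ → ℝ) :
    ℕ → Set (ℕ × A) × Set (ℕ × B)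
  | 0 => (Set.univ, Set.univ)
  | n + 1 =>
      let P := SigmaProc v1 v2 f n
      ({x | x ∈ P.1 ∧ ∃ μ : Belief B, memDelta f x.1 μ ∧ μ.probOn P.2 = 1 ∧ isBR v1 x.1 μ x.2},
       {y | y ∈ P.2 ∧ ∃ μ : Belief A, memDelta f y.1 μ ∧ μ.probOn P.1 = 1 ∧ isBR v2 y.1 μ y.2})

/-- The section `Σⁿ_{θ_{1k}}` of player 1 (as a set of actions). -/
def SigmaSec1 {A B : Type*} [Fintype A] [Fintype B]
    (v1 : A → B → ℝ) (v2 : B → A → ℝ) (f : ℕ → ℝ) (n k : ℕ) : Set A :=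
  {a | (k, a) ∈ (SigmaProc v1 v2 f n).1}

/-- The section `Σⁿ_{θ_{2k}}` of player 2 (as a set of actions). -/
def SigmaSec2 {A B : Type*} [Fintype A] [Fintype B]
    (v1 : A → B → ℝ) (v2 : B → A → ℝ) (f : ℕ → ℝ) (n k : ℕ) : Set B :=
  {b | (k, b) ∈ (SigmaProc v1 v2 f n).2}

/-- The CH-procedure requirement on beliefs at step `n+1`, given the previous
sections `Ψⁿ` of the opponent: the support of `μ` equals `∪_{t=0}^{n} Ψⁿ_{θ_{-i,t}}`
and `μ` is conditionally uniform over each `Ψⁿ_{θ_{-i,t}}`. -/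
def CHBelief {B : Type*} (Ψ : ℕ → Set B) (n : ℕ) (μ : Belief B) : Prop :=
  (∀ x : ℕ × B, μ.p x ≠ 0 ↔ x.1 ≤ n ∧ x.2 ∈ Ψ x.1) ∧
  (∀ t, t ≤ n → ∀ b b' : B, b ∈ Ψ t → b' ∈ Ψ t → μ.p (t, b) = μ.p (t, b'))

/-- The CH-procedure: step `n` returns, for each player and each level `k`,
the set of actions in `Ψⁿ_{θ_{ik}}`. -/
def CHProc {A B : Type*} [Fintype A] [Fintype B]
    (v1 : A → B → ℝ) (v2 : B → A → ℝ) (f : ℕ → ℝ) :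
    ℕ → (ℕ → Set A) × (ℕ → Set B)
  | 0 => (fun _ => Set.univ, fun _ => Set.univ)
  | n + 1 =>
      let P := CHProc v1 v2 f n
      (fun k =>
        if k = n + 1 then
          {a | ∃ μ : Belief B, memDelta f (n + 1) μ ∧ CHBelief P.2 n μ ∧ isBR v1 (n + 1) μ a}
        else P.1 k,
       fun k =>
        if k = n + 1 then
          {b | ∃ μ : Belief A, memDelta f (n + 1) μ ∧ CHBelief P.1 n μ ∧ isBR v2 (n + 1) μ b}
        else P.2 k)

/-- `Ψⁿ_{θ_{1k}}` for player 1 (as a set of actions). -/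
def CHSec1 {A B : Type*} [Fintype A] [Fintype B]
    (v1 : A → B → ℝ) (v2 : B → A → ℝ) (f : ℕ → ℝ) (n k : ℕ) : Set A :=
  (CHProc v1 v2 f n).1 k

/-- `Ψⁿ_{θ_{2k}}` for player 2 (as a set of actions). -/
def CHSec2 {A B : Type*} [Fintype A] [Fintype B]
    (v1 : A → B → ℝ) (v2 : B → A → ℝ) (f : ℕ → ℝ) (n k : ℕ) : Set B :=
  (CHProc v1 v2 f n).2 k

end


/-- The target `a* = (2/3)·(a₁+a₂)/2` in the beauty contest game. -/
noncomputable def bcStar (a b : Fin 101) : ℝ := (2 / 3) * (((a : ℕ) + (b : ℕ) : ℝ) / 2)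

/-- Beauty contest payoff: the player closer to `a*` (weakly) wins 1, else 0. -/
noncomputable def bcPay (a b : Fin 101) : ℝ :=
  if |((a : ℕ) : ℝ) - bcStar a b| ≤ |((b : ℕ) : ℝ) - bcStar a b| then 1 else 0


lemma bc_eq (a b : Fin 101) : bcPay a b = if (a : ℕ) ≤ (b : ℕ) then 1 else 0 := by
  unfold bcPay bcStar
  set x : ℝ := ((a : ℕ) : ℝ) with hx
  set y : ℝ := ((b : ℕ) : ℝ) with hy
  have hx0 : 0 ≤ x := Nat.cast_nonneg _
  have hy0 : 0 ≤ y := Nat.cast_nonneg _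
  by_cases h : (a : ℕ) ≤ (b : ℕ)
  · have hxy : x ≤ y := by rw [hx, hy]; exact_mod_cast h
    rw [if_pos h, if_pos]
    have h2 : |y - 2 / 3 * ((x + y) / 2)| = y - 2 / 3 * ((x + y) / 2) := by
      rw [abs_of_nonneg]; linarith
    rw [h2, abs_le]
    constructor <;> linarith
  · have hxy : y < x := by
      have : (b : ℕ) < (a : ℕ) := Nat.lt_of_not_le h
      rw [hx, hy]; exact_mod_cast this
    have hx1 : 1 ≤ x := by
      have : 1 ≤ (a : ℕ) := by omega
      rw [hx]; exact_mod_cast this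
    rw [if_neg h, if_neg]
    rw [not_le]
    have h2 : |x - 2 / 3 * ((x + y) / 2)| = x - 2 / 3 * ((x + y) / 2) := by
      rw [abs_of_nonneg]; linarith
    rw [h2, abs_lt]
    constructor <;> linarith

/-- in the beauty contest game, against any belief in Δ^{θ_{ik}} (k ≥ 1),
any larger action does strictly worse, with the stated margin. -/
theorem beauty_contest_dominance
    (f : ℕ → ℝ) (hf : ∀ n, 0 < f n) (hfsum : HasSum f 1)
    (k : ℕ) (hk : 1 ≤ k) (μ : Belief (Fin 101)) (hμ : memDelta f k μ)
    (a a' : Fin 101) (haa' : a < a') :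
    fnorm f k 0 * ((((a' : ℕ) : ℝ) - ((a : ℕ) : ℝ)) / 101)
        ≤ expPay bcPay k μ a - expPay bcPay k μ a' ∧
    0 < fnorm f k 0 * ((((a' : ℕ) : ℝ) - ((a : ℕ) : ℝ)) / 101) := by
  have hk0 : k ≠ 0 := by omega
  have hav : (a : ℕ) < (a' : ℕ) := haa'
  obtain ⟨h1, h2, h3⟩ := hμ hk0
  have hden : 0 < ∑ ℓ ∈ Finset.range k, f ℓ :=
    Finset.sum_pos (fun i _ => hf i) ⟨0, Finset.mem_range.mpr hk⟩
  have hf0 : 0 < fnorm f k 0 := div_pos (hf 0) hden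
  have hm0 : μ.marg 0 = fnorm f k 0 := h3 0 hk
  have hfne : fnorm f k 0 ≠ 0 := ne_of_gt hf0
  have hpb : ∀ b : Fin 101, μ.p (0, b) = fnorm f k 0 / 101 := by
    intro b
    have h2' := h2 (hm0 ▸ hf0) b
    rw [hm0, Fintype.card_fin] at h2'
    field_simp at h2' ⊢
    push_cast at h2'
    linarith
  have hS : Summable μ.p := μ.hasSum_one.summable
  have hb01 : ∀ (c b : Fin 101), 0 ≤ bcPay c b ∧ bcPay c b ≤ 1 := by
    intro c b; rw [bc_eq]; split <;> norm_num
  have hsum : ∀ c : Fin 101, Summable (fun x : ℕ × Fin 101 => μ.p x * bcPay c x.2) := by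
    intro c
    apply Summable.of_nonneg_of_le (fun x => mul_nonneg (μ.nonneg x) (hb01 c x.2).1)
      (fun x => ?_) hS
    calc μ.p x * bcPay c x.2 ≤ μ.p x * 1 :=
          mul_le_mul_of_nonneg_left (hb01 c x.2).2 (μ.nonneg x)
      _ = μ.p x := mul_one _
  have hexp : ∀ c : Fin 101,
      expPay bcPay k μ c = ∑' x : ℕ × Fin 101, μ.p x * bcPay c x.2 := by
    intro c; unfold expPay; simp [hk0]
  have hgsum : Summable (fun x : ℕ × Fin 101 =>
      μ.p x * bcPay a x.2 - μ.p x * bcPay a' x.2) := (hsum a).sub (hsum a')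
  have hdiff : expPay bcPay k μ a - expPay bcPay k μ a'
      = ∑' x : ℕ × Fin 101, (μ.p x * bcPay a x.2 - μ.p x * bcPay a' x.2) := by
    rw [hexp a, hexp a', Summable.tsum_sub (hsum a) (hsum a')]
  have hmono : ∀ b : Fin 101, bcPay a' b ≤ bcPay a b := by
    intro b; rw [bc_eq, bc_eq]
    by_cases h' : (a' : ℕ) ≤ (b : ℕ)
    · rw [if_pos h', if_pos (by omega : (a : ℕ) ≤ (b : ℕ))]
    · rw [if_neg h']; split <;> norm_num
  have hterm : ∀ x : ℕ × Fin 101, 0 ≤ μ.p x * bcPay a x.2 - μ.p x * bcPay a' x.2 :=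
    fun x => by nlinarith [μ.nonneg x, hmono x.2]
  set S : Finset (ℕ × Fin 101) :=
    (Finset.Ico a a').map ⟨fun b => ((0 : ℕ), b), fun b b' h => (Prod.ext_iff.mp h).2⟩ with hSdef
  have hlb : ∑ x ∈ S, (μ.p x * bcPay a x.2 - μ.p x * bcPay a' x.2)
      ≤ ∑' x : ℕ × Fin 101, (μ.p x * bcPay a x.2 - μ.p x * bcPay a' x.2) :=
    Summable.sum_le_tsum S (fun x _ => hterm x) hgsum
  have hScalc : ∑ x ∈ S, (μ.p x * bcPay a x.2 - μ.p x * bcPay a' x.2)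
      = (((a' : ℕ) - (a : ℕ) : ℕ) : ℝ) * (fnorm f k 0 / 101) := by
    rw [hSdef, Finset.sum_map]
    show ∑ x ∈ Finset.Ico a a', (μ.p ((0 : ℕ), x) * bcPay a x - μ.p ((0 : ℕ), x) * bcPay a' x) = _
    have hc : ∀ b ∈ Finset.Ico a a',
        μ.p (0, b) * bcPay a b - μ.p (0, b) * bcPay a' b = fnorm f k 0 / 101 := by
      intro b hb
      rw [Finset.mem_Ico] at hb
      have hab : (a : ℕ) ≤ (b : ℕ) := hb.1
      have hba' : (b : ℕ) < (a' : ℕ) := hb.2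
      rw [bc_eq, bc_eq, if_pos hab, if_neg (by omega), hpb b]; ring
    rw [Finset.sum_congr rfl hc, Finset.sum_const, Fin.card_Ico]
    simp [nsmul_eq_mul]
  have hcast : (((a' : ℕ) - (a : ℕ) : ℕ) : ℝ) = ((a' : ℕ) : ℝ) - ((a : ℕ) : ℝ) := by
    rw [Nat.cast_sub (le_of_lt hav)]
  have hcl : ((a : ℕ) : ℝ) < ((a' : ℕ) : ℝ) := Nat.cast_lt.mpr hav
  constructor
  · have heq : fnorm f k 0 * ((((a' : ℕ) : ℝ) - ((a : ℕ) : ℝ)) / 101)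
        = ∑ x ∈ S, (μ.p x * bcPay a x.2 - μ.p x * bcPay a' x.2) := by
      rw [hScalc, hcast]; ring
    rw [hdiff, heq]; exact hlb
  · apply mul_pos hf0
    apply div_pos (by linarith) (by norm_num)
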